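/- Let R be a commutative ring and L an acyclic complex of finitely generated projective R-modules. If E ⊗_R L is acyclic for every injective R-module E, then Hom_R(L, F) is acyclic for every flat R-module F. -/

import Mathlib

universe u

open TensorProduct

/-- A `ℤ`-indexed chain complex of `R`-modules: modules `X i` with
differentials `d i : X (i+1) →ₗ[R] X i` satisfying `d ∘ d = 0`. -/
structure ModComplex (R : Type u) [CommRing R] : Type (u + 1) where
  X : ℤ → Type u
  [addCommGroup : ∀ i, AddCommGroup (X i)]
  [module : ∀ i, Module R (X i)]
  d : ∀ i : ℤ, X (i + 1) →ₗ[R] X i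
  dd : ∀ i : ℤ, (d i).comp (d (i + 1)) = 0

attribute [instance] ModComplex.addCommGroup ModComplex.module

namespace ModComplex

variable {R : Type u} [CommRing R] (L : ModComplex R)

/-- The complex is acyclic: exact at every spot. -/
def Acyclic : Prop := ∀ i : ℤ, Function.Exact (L.d (i + 1)) (L.d i)

/-- The complex `Hom_R(L, N)` is acyclic. -/
def HomAcyclic (N : Type u) [AddCommGroup N] [Module R N] : Prop :=
  ∀ i : ℤ, Function.Exact
    (fun φ : L.X i →ₗ[R] N => φ.comp (L.d i))
    (fun φ : L.X (i + 1) →ₗ[R] N => φ.comp (L.d (i + 1)))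

/-- The complex `Hom_R(E, L)` is acyclic. -/
def CoHomAcyclic (E : Type u) [AddCommGroup E] [Module R E] : Prop :=
  ∀ i : ℤ, Function.Exact
    (fun φ : E →ₗ[R] L.X (i + 1 + 1) => (L.d (i + 1)).comp φ)
    (fun φ : E →ₗ[R] L.X (i + 1) => (L.d i).comp φ)

/-- The complex `E ⊗_R L` is acyclic. -/
def TensorAcyclic (E : Type u) [AddCommGroup E] [Module R E] : Prop :=
  ∀ i : ℤ, Function.Exact
    (LinearMap.lTensor E (L.d (i + 1)))
    (LinearMap.lTensor E (L.d i))

/-- The complex consists of finitely generated projective modules. -/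
def FGProj : Prop :=
  ∀ i : ℤ, Module.Finite R (L.X i) ∧ Module.Projective R (L.X i)

/-- A totally acyclic complex: an acyclic complex of finitely generated
projective modules such that `Hom_R(L, R)` is acyclic. -/
def TotallyAcyclic : Prop := L.Acyclic ∧ L.FGProj ∧ L.HomAcyclic R

end ModComplex

/-- `M` is (isomorphic to) the cokernel of the differential `d 0 : X 1 → X 0`. -/
def IsCokerOf {R : Type u} [CommRing R] (L : ModComplex R)
    (M : Type u) [AddCommGroup M] [Module R M] : Prop :=
  ∃ f : L.X 0 →ₗ[R] M, Function.Surjective f ∧ LinearMap.ker f = LinearMap.range (L.d 0)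

/-- `M` is (isomorphic to) the kernel of the differential `d 0 : X 1 → X 0`. -/
def IsKerOf {R : Type u} [CommRing R] (L : ModComplex R)
    (M : Type u) [AddCommGroup M] [Module R M] : Prop :=
  ∃ f : M →ₗ[R] L.X 1, Function.Injective f ∧ LinearMap.range f = LinearMap.ker (L.d 0)

/-- `M` is totally reflexive: it is a cokernel of a differential in a totally
acyclic complex of finitely generated projective modules. -/
def IsTotallyReflexive (R : Type u) [CommRing R]
    (M : Type u) [AddCommGroup M] [Module R M] : Prop :=
  ∃ L : ModComplex R, L.TotallyAcyclic ∧ IsCokerOf L M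

/-- Gorenstein projective module. -/
def IsGorensteinProjective (R : Type u) [CommRing R]
    (A : Type u) [AddCommGroup A] [Module R A] : Prop :=
  ∃ L : ModComplex R, L.Acyclic ∧ (∀ i, Module.Projective R (L.X i)) ∧
    (∀ (Q : Type u) [AddCommGroup Q] [Module R Q],
      Module.Projective R Q → L.HomAcyclic Q) ∧
    IsCokerOf L A

/-- Gorenstein injective module. -/
def IsGorensteinInjective (R : Type u) [CommRing R]
    (B : Type u) [AddCommGroup B] [Module R B] : Prop :=
  ∃ L : ModComplex R, L.Acyclic ∧ (∀ i, Module.Injective R (L.X i)) ∧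
    (∀ (E : Type u) [AddCommGroup E] [Module R E],
      Module.Injective R E → L.CoHomAcyclic E) ∧
    IsKerOf L B

/-- Gorenstein flat module. -/
def IsGorensteinFlat (R : Type u) [CommRing R]
    (M : Type u) [AddCommGroup M] [Module R M] : Prop :=
  ∃ L : ModComplex R, L.Acyclic ∧ (∀ i, Module.Flat R (L.X i)) ∧
    (∀ (E : Type u) [AddCommGroup E] [Module R E],
      Module.Injective R E → L.TensorAcyclic E) ∧
    IsCokerOf L M

/-- `M` has projective dimension at most `n`. -/
def ProjDimLe (R : Type u) [CommRing R] :
    ℕ → ∀ (M : Type u) [AddCommGroup M] [Module R M], Prop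
  | 0, M, _, _ => Module.Projective R M
  | n + 1, M, _, _ =>
    ∃ (P : Type u) (_ : AddCommGroup P) (_ : Module R P) (f : P →ₗ[R] M),
      Module.Projective R P ∧ Function.Surjective f ∧
        ProjDimLe R n (LinearMap.ker f)

/-- `M` has flat dimension at most `n`. -/
def FlatDimLe (R : Type u) [CommRing R] :
    ℕ → ∀ (M : Type u) [AddCommGroup M] [Module R M], Prop
  | 0, M, _, _ => Module.Flat R M
  | n + 1, M, _, _ =>
    ∃ (F : Type u) (_ : AddCommGroup F) (_ : Module R F) (f : F →ₗ[R] M),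
      Module.Flat R F ∧ Function.Surjective f ∧
        FlatDimLe R n (LinearMap.ker f)

/-- `M` has Gorenstein projective dimension at most `n`. -/
def GProjDimLe (R : Type u) [CommRing R] :
    ℕ → ∀ (M : Type u) [AddCommGroup M] [Module R M], Prop
  | 0, M, _, _ => IsGorensteinProjective R M
  | n + 1, M, _, _ =>
    ∃ (P : Type u) (_ : AddCommGroup P) (_ : Module R P) (f : P →ₗ[R] M),
      IsGorensteinProjective R P ∧ Function.Surjective f ∧
        GProjDimLe R n (LinearMap.ker f)

/-- The projective dimension, as an element of `ℕ∞`. -/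
noncomputable def projDim (R : Type u) [CommRing R]
    (M : Type u) [AddCommGroup M] [Module R M] : ℕ∞ :=
  sInf {n : ℕ∞ | ∃ m : ℕ, n = m ∧ ProjDimLe R m M}

/-- The Gorenstein projective dimension, as an element of `ℕ∞`. -/
noncomputable def gProjDim (R : Type u) [CommRing R]
    (M : Type u) [AddCommGroup M] [Module R M] : ℕ∞ :=
  sInf {n : ℕ∞ | ∃ m : ℕ, n = m ∧ GProjDimLe R m M}


section Aux
variable {R : Type u} [CommRing R]

open CharacterModule

lemma exact_of_dual_exact {A B C : Type u} [AddCommGroup A] [AddCommGroup B] [AddCommGroup C]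
    [Module R A] [Module R B] [Module R C] (f : A →ₗ[R] B) (g : B →ₗ[R] C)
    (h : Function.Exact (CharacterModule.dual g) (CharacterModule.dual f)) :
    Function.Exact f g := by
  intro y
  constructor
  · intro hy
    by_contra hy'
    have hne : (Submodule.Quotient.mk y : B ⧸ LinearMap.range f) ≠ 0 := by
      intro h0
      rw [Submodule.Quotient.mk_eq_zero] at h0
      exact hy' (LinearMap.mem_range.mp h0)
    obtain ⟨c, hc⟩ := exists_character_apply_ne_zero_of_ne_zero hne
    set χ : CharacterModule B := CharacterModule.dual (LinearMap.range f).mkQ c with hχ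
    have hχf : CharacterModule.dual f χ = 0 := by
      ext a
      have : (Submodule.Quotient.mk (f a) : B ⧸ LinearMap.range f) = 0 := by
        rw [Submodule.Quotient.mk_eq_zero]; exact LinearMap.mem_range_self f a
      exact (congrArg c this).trans c.map_zero
    obtain ⟨c', hc'⟩ := (h χ).mp hχf
    have : χ y = 0 := by
      rw [← hc']
      exact (congrArg c' hy).trans c'.map_zero
    exact hc this
  · rintro ⟨x, rfl⟩
    apply eq_zero_of_character_apply
    intro c
    have h0 : CharacterModule.dual f (CharacterModule.dual g c) = 0 :=
      h.apply_apply_eq_zero c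
    exact DFunLike.congr_fun h0 x

variable (F : Type u) [AddCommGroup F] [Module R F]

/-- The natural map `F⋆ ⊗ X → (Hom(X,F))⋆`, `χ ⊗ x ↦ (φ ↦ χ (φ x))`. -/
noncomputable def etaMap (X : Type u) [AddCommGroup X] [Module R X] :
    CharacterModule F ⊗[R] X →ₗ[R] CharacterModule (X →ₗ[R] F) :=
  TensorProduct.lift <| LinearMap.mk₂ R
    (fun χ x => χ.comp
      { toFun := fun φ : X →ₗ[R] F => φ x
        map_zero' := rfl
        map_add' := fun _ _ => rfl })
    (fun χ₁ χ₂ x => by ext φ; rfl)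
    (fun r χ x => by ext φ; rfl)
    (fun χ x₁ x₂ => by
      ext φ
      exact (congrArg χ (φ.map_add x₁ x₂)).trans (χ.map_add _ _))
    (fun r χ x => by
      ext φ
      exact congrArg χ (φ.map_smul r x))

@[simp] lemma etaMap_tmul_apply (X : Type u) [AddCommGroup X] [Module R X]
    (χ : CharacterModule F) (x : X) (φ : X →ₗ[R] F) :
    etaMap F X (χ ⊗ₜ[R] x) φ = χ (φ x) := rfl

lemma etaMap_natural {X Y : Type u} [AddCommGroup X] [Module R X] [AddCommGroup Y] [Module R Y]
    (f : X →ₗ[R] Y) :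
    etaMap F Y ∘ₗ LinearMap.lTensor (CharacterModule F) f
      = CharacterModule.dual (f.lcomp R F) ∘ₗ etaMap F X := by
  apply LinearMap.ext
  intro t
  induction t using TensorProduct.induction_on with
  | zero => simp; exact (AddMonoidHom.zero_comp _).symm
  | tmul χ x => rfl
  | add a b ha hb => simp only [map_add, ha, hb]

lemma etaMap_bijective (X : Type u) [AddCommGroup X] [Module R X]
    (hfin : Module.Finite R X) (hproj : Module.Projective R X) :
    Function.Bijective (etaMap (R := R) F X) := by
  classical
  obtain ⟨n, p, s, hp, hs, hps⟩ := Module.Finite.exists_comp_eq_id_of_projective R X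
  set e : Fin n → X := fun j => p (Pi.single j 1) with he
  have key : ∀ x : X, (∑ j, s x j • e j) = x := by
    intro x
    have h1 : (∑ j, s x j • (Pi.single j 1 : Fin n → R)) = s x := by
      ext k
      simp [Finset.sum_apply, Pi.single_apply, mul_ite]
    calc (∑ j, s x j • e j) = p (∑ j, s x j • (Pi.single j 1 : Fin n → R)) := by
          rw [map_sum]; simp [he]
      _ = x := by rw [h1]; exact DFunLike.congr_fun hps x
  -- the additive map F → Hom(X,F), v ↦ (x ↦ s x j • v)
  let sm : Fin n → (F →+ (X →ₗ[R] F)) := fun j =>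
    { toFun := fun v =>
        { toFun := fun x => s x j • v
          map_add' := fun x₁ x₂ => by
            show s (x₁ + x₂) j • v = s x₁ j • v + s x₂ j • v
            rw [map_add, Pi.add_apply, add_smul]
          map_smul' := fun r x => by
            show s (r • x) j • v = r • (s x j • v)
            rw [map_smul, Pi.smul_apply, smul_eq_mul, mul_smul] }
      map_zero' := by ext x; simp
      map_add' := fun v₁ v₂ => by ext x; simp }
  -- the inverse map
  let β : CharacterModule (X →ₗ[R] F) → CharacterModule F ⊗[R] X := fun c =>
    ∑ j, (c.comp (sm j) : CharacterModule F) ⊗ₜ[R] e j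
  have βadd : ∀ c₁ c₂, β (c₁ + c₂) = β c₁ + β c₂ := fun c₁ c₂ => by
    simp only [β]
    rw [← Finset.sum_add_distrib]
    refine Finset.sum_congr rfl fun j _ => ?_
    exact (congrArg (fun x : CharacterModule F => x ⊗ₜ[R] e j) (AddMonoidHom.add_comp c₁ c₂ (sm j))).trans (TensorProduct.add_tmul _ _ _)
  have left : ∀ t, β (etaMap F X t) = t := by
    intro t
    induction t using TensorProduct.induction_on with
    | zero =>
      rw [map_zero]
      simp only [β]
      refine Finset.sum_eq_zero fun j _ => ?_
      exact (congrArg (fun x : CharacterModule F => x ⊗ₜ[R] e j) (AddMonoidHom.zero_comp (sm j))).trans (TensorProduct.zero_tmul _ _)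
    | tmul χ x =>
      have hχ : ∀ j, ((etaMap F X (χ ⊗ₜ[R] x)).comp (sm j) : CharacterModule F)
          = s x j • χ := by
        intro j; ext v; rfl
      simp only [β, hχ]
      calc (∑ j, (s x j • χ) ⊗ₜ[R] e j) = ∑ j, χ ⊗ₜ[R] (s x j • e j) := by
            refine Finset.sum_congr rfl fun j _ => ?_
            rw [TensorProduct.smul_tmul]
        _ = χ ⊗ₜ[R] x := by rw [← TensorProduct.tmul_sum, key]
    | add a b ha hb =>
      rw [map_add, βadd, ha, hb]
  have right : ∀ c, etaMap F X (β c) = c := by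
    intro c
    ext φ
    have h1 : etaMap F X (β c) φ = ∑ j, c ((sm j) (φ (e j))) := by
      simp only [β, map_sum]
      refine (AddMonoidHom.finset_sum_apply _ _ _).trans ?_
      rfl
    rw [h1, ← map_sum]
    congr 1
    ext x
    simp only [LinearMap.coe_sum, Finset.sum_apply]
    calc (∑ j, ((sm j) (φ (e j))) x) = ∑ j, φ (s x j • e j) := by
          refine Finset.sum_congr rfl fun j _ => ?_
          rw [map_smul]; rfl
      _ = φ x := by rw [← map_sum, key]
  exact ⟨Function.LeftInverse.injective left, Function.RightInverse.surjective right⟩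

end Aux

/-- If `L` is an acyclic complex of finitely generated projective modules and
`E ⊗_R L` is acyclic for every injective `E`, then `Hom_R(L, F)` is acyclic
for every flat `F`. -/
theorem tensor_acyclic_implies_hom_flat_acyclic {R : Type u} [CommRing R]
    (L : ModComplex R) (hfg : L.FGProj) (hac : L.Acyclic)
    (htens : ∀ (E : Type u) [AddCommGroup E] [Module R E],
      Module.Injective R E → L.TensorAcyclic E)
    (F : Type u) [AddCommGroup F] [Module R F] (hF : Module.Flat R F) :
    L.HomAcyclic F := by
  have hEinj : Module.Injective R (CharacterModule F) :=
    Module.Flat.iff_characterModule_injective.mp hF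
  intro i
  have hex := htens (CharacterModule F) hEinj i
  let e₁ := LinearEquiv.ofBijective (etaMap (R := R) F (L.X (i + 1 + 1)))
    (etaMap_bijective F _ (hfg (i + 1 + 1)).1 (hfg (i + 1 + 1)).2)
  let e₂ := LinearEquiv.ofBijective (etaMap (R := R) F (L.X (i + 1)))
    (etaMap_bijective F _ (hfg (i + 1)).1 (hfg (i + 1)).2)
  let e₃ := LinearEquiv.ofBijective (etaMap (R := R) F (L.X i))
    (etaMap_bijective F _ (hfg i).1 (hfg i).2)
  have hdual : Function.Exact
      (CharacterModule.dual ((L.d (i + 1)).lcomp R F))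
      (CharacterModule.dual ((L.d i).lcomp R F)) :=
    Function.Exact.of_ladder_linearEquiv_of_exact
      (e₁ := e₁) (e₂ := e₂) (e₃ := e₃)
      (etaMap_natural F (L.d (i + 1))).symm
      (etaMap_natural F (L.d i)).symm hex
  exact exact_of_dual_exact ((L.d i).lcomp R F) ((L.d (i + 1)).lcomp R F) hdual
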